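/- Satisfiability reduces to validity in quantifier-free separation logic: a formula φ over a finite set X of variables is satisfiable if and only if there exists an equivalence relation ≈ on X such that the formula (emp ∧ ⋀_{x≈y} x = y ∧ ⋀_{x≉y} x ≠ y) ⟹ (φ ⧆ ⊤) is valid. -/

import Mathlib

abbrev Var := ℕ
abbrev Loc := ℕ
abbrev Heap := Finmap (fun _ : Loc => Loc)
abbrev Store := Var → Loc

def SLProp := Store → Heap → Prop

def star (P Q : SLProp) : SLProp := fun s h =>
  ∃ h₁ h₂ : Heap, Finmap.Disjoint h₁ h₂ ∧ h₁ ∪ h₂ = h ∧ P s h₁ ∧ Q s h₂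

def wand (P Q : SLProp) : SLProp := fun s h =>
  ∀ h' : Heap, Finmap.Disjoint h' h → P s h' → Q s (h ∪ h')

def septraction (P Q : SLProp) : SLProp := fun s h =>
  ∃ h' : Heap, Finmap.Disjoint h h' ∧ P s h' ∧ Q s (h ∪ h')

inductive Formula : Type where
  | eq : Var → Var → Formula
  | pto : Var → Var → Formula
  | emp : Formula
  | not : Formula → Formula
  | and : Formula → Formula → Formula
  | star : Formula → Formula → Formula
  | wand : Formula → Formula → Formula

def Formula.vars : Formula → Finset Var
  | .eq x y => {x, y}
  | .pto x y => {x, y}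
  | .emp => ∅
  | .not φ => φ.vars
  | .and φ ψ => φ.vars ∪ ψ.vars
  | .star φ ψ => φ.vars ∪ ψ.vars
  | .wand φ ψ => φ.vars ∪ ψ.vars

def sat : Store → Heap → Formula → Prop
  | s, _, .eq x y => s x = s y
  | s, h, .pto x y => Finmap.lookup (s x) h = some (s y)
  | _, h, .emp => h = ∅
  | s, h, .not φ => ¬ sat s h φ
  | s, h, .and φ ψ => sat s h φ ∧ sat s h ψ
  | s, h, .star φ ψ =>
      ∃ h₁ h₂ : Heap, Finmap.Disjoint h₁ h₂ ∧ h₁ ∪ h₂ = h ∧ sat s h₁ φ ∧ sat s h₂ ψ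
  | s, h, .wand φ ψ =>
      ∀ h' : Heap, Finmap.Disjoint h' h → sat s h' φ → sat s (h ∪ h') ψ

/-! ### Auxiliary: renaming heaps along a permutation of locations -/

def mapHeap (σ : Equiv.Perm ℕ) (h : Heap) : Heap :=
  ⟨h.entries.map (fun p => ⟨σ p.1, σ p.2⟩), by
    rw [← Multiset.nodup_keys]
    have hk : (h.entries.map (fun p : Σ _ : ℕ, ℕ => (⟨σ p.1, σ p.2⟩ : Σ _ : ℕ, ℕ))).keys
        = h.entries.keys.map σ := by
      simp [Multiset.keys, Multiset.map_map, Function.comp]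
    rw [hk]
    exact (Multiset.nodup_keys.mpr h.nodupKeys).map σ.injective⟩

lemma entries_mapHeap (σ : Equiv.Perm ℕ) (h : Heap) :
    (mapHeap σ h).entries = h.entries.map (fun p => ⟨σ p.1, σ p.2⟩) := rfl

lemma keys_entries_mapHeap (σ : Equiv.Perm ℕ) (h : Heap) :
    (mapHeap σ h).entries.keys = h.entries.keys.map σ := by
  simp [entries_mapHeap, Multiset.keys, Multiset.map_map, Function.comp]

lemma mem_mapHeap (σ : Equiv.Perm ℕ) (h : Heap) (a : Loc) :
    a ∈ mapHeap σ h ↔ σ.symm a ∈ h := by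
  rw [Finmap.mem_def, Finmap.mem_def, keys_entries_mapHeap, Multiset.mem_map]
  constructor
  · rintro ⟨b, hb, rfl⟩; simpa
  · intro hb; exact ⟨σ.symm a, hb, by simp⟩

lemma lookup_mapHeap (σ : Equiv.Perm ℕ) (h : Heap) (a : Loc) :
    (mapHeap σ h).lookup a = (h.lookup (σ.symm a)).map σ := by
  cases hl : h.lookup (σ.symm a) with
  | none =>
    simp only [Option.map_none]
    rw [Finmap.lookup_eq_none] at hl ⊢
    intro hmem
    exact hl ((mem_mapHeap σ h a).mp hmem)
  | some b =>
    simp only [Option.map_some]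
    rw [Finmap.lookup_eq_some_iff] at hl ⊢
    rw [entries_mapHeap]
    refine Multiset.mem_map.mpr ⟨⟨σ.symm a, b⟩, hl, ?_⟩
    simp

lemma mapHeap_eq_empty (σ : Equiv.Perm ℕ) (h : Heap) :
    mapHeap σ h = ∅ ↔ h = ∅ := by
  rw [← Finmap.ext_iff', ← Finmap.ext_iff', entries_mapHeap]
  have he : (∅ : Heap).entries = 0 := rfl
  rw [he, Multiset.map_eq_zero]

lemma mapHeap_union (σ : Equiv.Perm ℕ) (h₁ h₂ : Heap) :
    mapHeap σ (h₁ ∪ h₂) = mapHeap σ h₁ ∪ mapHeap σ h₂ := by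
  classical
  apply Finmap.ext_lookup
  intro a
  by_cases hm : σ.symm a ∈ h₁
  · rw [Finmap.lookup_union_left ((mem_mapHeap σ h₁ a).mpr hm), lookup_mapHeap, lookup_mapHeap,
      Finmap.lookup_union_left hm]
  · rw [Finmap.lookup_union_right (fun c => hm ((mem_mapHeap σ h₁ a).mp c)), lookup_mapHeap,
      lookup_mapHeap, Finmap.lookup_union_right hm]

lemma mapHeap_symm_mapHeap (σ : Equiv.Perm ℕ) (h : Heap) :
    mapHeap σ.symm (mapHeap σ h) = h := by
  apply Finmap.ext_lookup
  intro a
  rw [lookup_mapHeap, lookup_mapHeap, Equiv.symm_symm, Equiv.symm_apply_apply]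
  cases h.lookup a <;> simp

lemma mapHeap_mapHeap_symm (σ : Equiv.Perm ℕ) (h : Heap) :
    mapHeap σ (mapHeap σ.symm h) = h := by
  have := mapHeap_symm_mapHeap σ.symm h
  simpa using this

lemma disjoint_mapHeap (σ : Equiv.Perm ℕ) (h₁ h₂ : Heap) :
    Finmap.Disjoint (mapHeap σ h₁) (mapHeap σ h₂) ↔ Finmap.Disjoint h₁ h₂ := by
  constructor
  · intro H a ha1 ha2
    exact H (σ a) ((mem_mapHeap σ h₁ (σ a)).mpr (by simpa))
      ((mem_mapHeap σ h₂ (σ a)).mpr (by simpa))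
  · intro H a ha1 ha2
    exact H _ ((mem_mapHeap σ h₁ a).mp ha1) ((mem_mapHeap σ h₂ a).mp ha2)

/-! ### Equivariance of satisfaction -/

lemma sat_mapHeap (σ : Equiv.Perm ℕ) (s s' : Store) :
    ∀ (φ : Formula), (∀ x ∈ φ.vars, s' x = σ (s x)) →
      ∀ h : Heap, sat s h φ ↔ sat s' (mapHeap σ h) φ := by
  intro φ
  induction φ with
  | eq x y =>
    intro hs h
    have hx := hs x (by simp [Formula.vars])
    have hy := hs y (by simp [Formula.vars])
    simp [sat, hx, hy, σ.injective.eq_iff]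
  | pto x y =>
    intro hs h
    have hx := hs x (by simp [Formula.vars])
    have hy := hs y (by simp [Formula.vars])
    show h.lookup (s x) = some (s y) ↔ (mapHeap σ h).lookup (s' x) = some (s' y)
    rw [hx, hy, lookup_mapHeap, Equiv.symm_apply_apply]
    simp [Option.map_eq_some_iff, σ.injective.eq_iff]
  | emp =>
    intro _ h
    show h = ∅ ↔ mapHeap σ h = ∅
    rw [mapHeap_eq_empty]
  | not φ ih =>
    intro hs h
    have hsφ : ∀ x ∈ φ.vars, s' x = σ (s x) := fun x hx => hs x hx
    show ¬ sat s h φ ↔ ¬ sat s' (mapHeap σ h) φ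
    rw [ih hsφ h]
  | and φ ψ ihφ ihψ =>
    intro hs h
    have hsφ : ∀ x ∈ φ.vars, s' x = σ (s x) := fun x hx =>
      hs x (by simp [Formula.vars, hx])
    have hsψ : ∀ x ∈ ψ.vars, s' x = σ (s x) := fun x hx =>
      hs x (by simp [Formula.vars, hx])
    show sat s h φ ∧ sat s h ψ ↔ _ ∧ _
    rw [ihφ hsφ h, ihψ hsψ h]
  | star φ ψ ihφ ihψ =>
    intro hs h
    have hsφ : ∀ x ∈ φ.vars, s' x = σ (s x) := fun x hx =>
      hs x (by simp [Formula.vars, hx])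
    have hsψ : ∀ x ∈ ψ.vars, s' x = σ (s x) := fun x hx =>
      hs x (by simp [Formula.vars, hx])
    constructor
    · rintro ⟨h₁, h₂, hd, hu, hφ, hψ⟩
      exact ⟨mapHeap σ h₁, mapHeap σ h₂, (disjoint_mapHeap σ h₁ h₂).mpr hd,
        by rw [← mapHeap_union, hu], (ihφ hsφ h₁).mp hφ, (ihψ hsψ h₂).mp hψ⟩
    · rintro ⟨g₁, g₂, hd, hu, hφ, hψ⟩
      refine ⟨mapHeap σ.symm g₁, mapHeap σ.symm g₂,
        (disjoint_mapHeap σ.symm g₁ g₂).mpr hd, ?_, ?_, ?_⟩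
      · rw [← mapHeap_union, hu, mapHeap_symm_mapHeap]
      · exact (ihφ hsφ _).mpr (by rwa [mapHeap_mapHeap_symm])
      · exact (ihψ hsψ _).mpr (by rwa [mapHeap_mapHeap_symm])
  | wand φ ψ ihφ ihψ =>
    intro hs h
    have hsφ : ∀ x ∈ φ.vars, s' x = σ (s x) := fun x hx =>
      hs x (by simp [Formula.vars, hx])
    have hsψ : ∀ x ∈ ψ.vars, s' x = σ (s x) := fun x hx =>
      hs x (by simp [Formula.vars, hx])
    constructor
    · intro H g' hd hφ
      have hd' : Finmap.Disjoint (mapHeap σ.symm g') h := by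
        have := (disjoint_mapHeap σ.symm g' (mapHeap σ h)).mpr hd
        rwa [mapHeap_symm_mapHeap] at this
      have hφ' : sat s (mapHeap σ.symm g') φ :=
        (ihφ hsφ _).mpr (by rwa [mapHeap_mapHeap_symm])
      have := (ihψ hsψ _).mp (H _ hd' hφ')
      rwa [mapHeap_union, mapHeap_mapHeap_symm] at this
    · intro H h' hd hφ
      have hd' : Finmap.Disjoint (mapHeap σ h') (mapHeap σ h) :=
        (disjoint_mapHeap σ h' h).mpr hd
      have hφ' : sat s' (mapHeap σ h') φ := (ihφ hsφ h').mp hφ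
      have := H _ hd' hφ'
      apply (ihψ hsψ (h ∪ h')).mpr
      rwa [mapHeap_union]

/-! ### Extending a finite equality-pattern correspondence to a permutation -/

lemma exists_perm (s s' : Store) (X : Finset Var)
    (hp : ∀ x ∈ X, ∀ y ∈ X, (s x = s y ↔ s' x = s' y)) :
    ∃ σ : Equiv.Perm ℕ, ∀ x ∈ X, σ (s x) = s' x := by
  classical
  induction X using Finset.induction_on with
  | empty => exact ⟨1, by simp⟩
  | @insert a Y ha ih =>
    obtain ⟨σ, hσ⟩ := ih (fun x hx y hy =>
      hp x (Finset.mem_insert_of_mem hx) y (Finset.mem_insert_of_mem hy))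
    by_cases hc : ∃ x ∈ Y, s a = s x
    · obtain ⟨x, hx, hax⟩ := hc
      refine ⟨σ, ?_⟩
      intro z hz
      rcases Finset.mem_insert.mp hz with rfl | hz
      · have h1 : s' z = s' x :=
          (hp z (Finset.mem_insert_self _ _) x (Finset.mem_insert_of_mem hx)).mp hax
        rw [hax, hσ x hx, h1]
      · exact hσ z hz
    · push_neg at hc
      refine ⟨σ.trans (Equiv.swap (σ (s a)) (s' a)), ?_⟩
      intro z hz
      rcases Finset.mem_insert.mp hz with rfl | hz
      · simp
      · have h1 : s z ≠ s a := fun he => hc z hz he.symm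
        have h2 : s' z ≠ s' a := fun he =>
          h1 ((hp z (Finset.mem_insert_of_mem hz) a (Finset.mem_insert_self _ _)).mpr he)
        have h3 : σ (s z) ≠ σ (s a) := fun he => h1 (σ.injective he)
        simp only [Equiv.trans_apply]
        rw [hσ z hz] at h3 ⊢
        exact Equiv.swap_apply_of_ne_of_ne h3 h2

/-- Satisfiability reduces to validity: φ is satisfiable iff for some
equivalence relation ≈ on its variables, the formula
(emp ∧ ⋀_{x≈y} x = y ∧ ⋀_{x≉y} x ≠ y) ⟹ (φ ⧆ ⊤) is valid. -/
theorem stmt_19 (φ : Formula) (X : Finset Var) (hX : φ.vars ⊆ X) :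
    (∃ (s : Store) (h : Heap), sat s h φ) ↔
    ∃ r : Var → Var → Prop, Equivalence r ∧
      ∀ (s : Store) (h : Heap),
        (h = ∅ ∧ (∀ x ∈ X, ∀ y ∈ X, r x y → s x = s y) ∧
          (∀ x ∈ X, ∀ y ∈ X, ¬ r x y → s x ≠ s y)) →
        ∃ h' : Heap, Finmap.Disjoint h h' ∧ sat s h' φ := by
  classical
  constructor
  · rintro ⟨s, h, hsat⟩
    refine ⟨fun x y => s x = s y,
      ⟨fun _ => rfl, fun h => h.symm, fun h1 h2 => h1.trans h2⟩, ?_⟩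
    rintro s' h0 ⟨rfl, hpos, hneg⟩
    have hp : ∀ x ∈ X, ∀ y ∈ X, (s x = s y ↔ s' x = s' y) := by
      intro x hx y hy
      constructor
      · exact hpos x hx y hy
      · intro he
        by_contra hne
        exact hneg x hx y hy hne he
    obtain ⟨σ, hσ⟩ := exists_perm s s' X hp
    refine ⟨mapHeap σ h, Finmap.disjoint_empty _, ?_⟩
    exact (sat_mapHeap σ s s' φ (fun x hx => (hσ x (hX hx)).symm) h).mp hsat
  · rintro ⟨r, hr, hval⟩
    set s' : Store := fun x => sInf {y | y ∈ X ∧ r x y} with hs'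
    have hmem : ∀ x ∈ X, s' x ∈ {y | y ∈ X ∧ r x y} := by
      intro x hx
      exact Nat.sInf_mem ⟨x, hx, hr.refl x⟩
    have key : ∀ x ∈ X, ∀ y ∈ X, r x y → s' x = s' y := by
      intro x hx y hy hxy
      have hset : {z | z ∈ X ∧ r x z} = {z | z ∈ X ∧ r y z} := by
        ext z
        simp only [Set.mem_setOf_eq]
        exact and_congr_right fun _ =>
          ⟨fun hz => hr.trans (hr.symm hxy) hz, fun hz => hr.trans hxy hz⟩
      simp only [hs', hset]
    have key2 : ∀ x ∈ X, ∀ y ∈ X, ¬ r x y → s' x ≠ s' y := by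
      intro x hx y hy hxy he
      obtain ⟨_, hrx⟩ := hmem x hx
      obtain ⟨_, hry⟩ := hmem y hy
      rw [he] at hrx
      exact hxy (hr.trans hrx (hr.symm hry))
    obtain ⟨h', _, hsat⟩ := hval s' ∅ ⟨rfl, key, key2⟩
    exact ⟨s', h', hsat⟩
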